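/- Let a ≥ 1 and let x ∈ [a^3/12 · (1 − a^{−4/3}), a^3/12 · (1 + a^{−4/3})], and set y = 12x/a^3 − 1. Then (e·a^3/(12x))^{x/2} = exp(a^3/24 − a^3 y^2/48 + E) where |E| ≤ C/a for an absolute constant C. -/

import Mathlib

set_option maxHeartbeats 1000000

open Real Finset

lemma log_taylor2 (d : ℝ) (hd : |d| ≤ 1/2) :
    |Real.log (1 + d) - (d - d^2/2)| ≤ 2 * |d|^3 := by
  have h1 : |(-d)| < 1 := by rw [abs_neg]; linarith [abs_nonneg d, hd]
  have h := Real.abs_log_sub_add_sum_range_le h1 2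
  simp [Finset.sum_range_succ] at h
  have h3 : |d|^3 / (1 - |d|) ≤ 2 * |d|^3 := by
    rw [div_le_iff₀ (by linarith [abs_nonneg d])]
    nlinarith [pow_nonneg (abs_nonneg d) 3]
  have h4 : Real.log (1 + d) - (d - d^2/2) = -d + d^2/(1+1) + Real.log (1 + d) := by ring
  rw [h4]
  linarith

lemma g_bound (t : ℝ) (ht : |t - 1| ≤ 1/2) :
    |t - t * Real.log t - 1 + (t-1)^2/2| ≤ 4 * |t-1|^3 := by
  have hab := abs_le.1 ht
  have hlt : Real.log t = Real.log (1 + (t-1)) := by ring_nf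
  have hr := log_taylor2 (t-1) ht
  set r := Real.log (1 + (t-1)) - ((t-1) - (t-1)^2/2) with hrdef
  have key : t - t * Real.log t - 1 + (t-1)^2/2 = (t-1)^3/2 - t * r := by
    rw [hlt]; simp only [hrdef]; ring
  rw [key]
  have h1 : |(t-1)^3/2 - t*r| ≤ |(t-1)^3/2| + |t*r| := abs_sub _ _
  have h2 : |(t-1)^3/2| = |t-1|^3/2 := by rw [abs_div, abs_pow]; norm_num
  have h3 : |t*r| ≤ (3/2) * (2*|t-1|^3) := by
    rw [abs_mul]
    have : |t| ≤ 3/2 := abs_le.2 ⟨by linarith, by linarith⟩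
    exact mul_le_mul this hr (abs_nonneg r) (by norm_num)
  calc |(t-1)^3/2 - t*r| ≤ |t-1|^3/2 + (3/2)*(2*|t-1|^3) := by rw [← h2]; linarith
    _ ≤ 4 * |t-1|^3 := by nlinarith [pow_nonneg (abs_nonneg (t-1)) 3]

/-- Laplace-type expansion near the maximum: for `a ≥ 1` and
`x ∈ [a³/12 (1−a^{−4/3}), a³/12 (1+a^{−4/3})]`, setting `y = 12x/a³ − 1`,
`(e a³/(12x))^{x/2} = exp(a³/24 − a³y²/48 + E)` with `|E| ≤ C/a`
for an absolute constant `C`. -/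
theorem stmt6 : ∃ C : ℝ, 0 < C ∧ ∀ a x : ℝ, 1 ≤ a →
    a ^ 3 / 12 * (1 - a ^ (-(4 : ℝ) / 3)) ≤ x →
    x ≤ a ^ 3 / 12 * (1 + a ^ (-(4 : ℝ) / 3)) →
    ∃ E : ℝ, |E| ≤ C / a ∧
      (Real.exp 1 * a ^ 3 / (12 * x)) ^ (x / 2) =
        Real.exp (a ^ 3 / 24 - a ^ 3 * (12 * x / a ^ 3 - 1) ^ 2 / 48 + E) := by
  refine ⟨100, by norm_num, fun a x ha h1 h2 => ?_⟩
  have ha0 : (0:ℝ) < a := lt_of_lt_of_le one_pos ha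
  have ha3 : (0:ℝ) < a^3 := by positivity
  set ε : ℝ := a ^ (-(4:ℝ)/3) with hεdef
  have hε0 : 0 < ε := Real.rpow_pos_of_pos ha0 _
  have hε1 : ε ≤ 1 := Real.rpow_le_one_of_one_le_of_nonpos ha (by norm_num)
  have hε3 : ε^3 = (a^4)⁻¹ := by
    rw [hεdef, ← Real.rpow_natCast (a ^ (-(4:ℝ)/3)) 3, ← Real.rpow_mul ha0.le]
    norm_num
  rcases eq_or_lt_of_le (le_trans (by nlinarith) h1 : (0:ℝ) ≤ x) with hx0 | hx0
  · -- x = 0, hence a = 1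
    have hε1' : 1 ≤ ε := by nlinarith
    have haeq : a = 1 := by
      by_contra hne
      have : 1 < a := lt_of_le_of_ne ha (Ne.symm hne)
      have : ε < 1 := Real.rpow_lt_one_of_one_lt_of_neg this (by norm_num)
      linarith
    refine ⟨-(1:ℝ)/48, by rw [haeq]; norm_num [abs_div], ?_⟩
    rw [haeq, ← hx0]
    norm_num
  · -- x > 0
    set t : ℝ := 12 * x / a^3 with htdef
    have ht0 : 0 < t := by positivity
    have htl : 1 - ε ≤ t := by
      rw [htdef, le_div_iff₀ ha3]
      nlinarith
    have htu : t ≤ 1 + ε := by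
      rw [htdef, div_le_iff₀ ha3]
      nlinarith
    have habs : |t - 1| ≤ ε := abs_le.2 ⟨by linarith, by linarith⟩
    have hb : 0 < Real.exp 1 * a^3 / (12*x) := by positivity
    have hlog : Real.log (Real.exp 1 * a^3 / (12*x)) = 1 - Real.log t := by
      rw [Real.log_div (by positivity) (by positivity), Real.log_mul (Real.exp_ne_zero 1) ha3.ne',
        Real.log_exp, htdef, Real.log_div (by positivity) ha3.ne']
      ring
    refine ⟨Real.log (Real.exp 1 * a^3/(12*x)) * (x/2)
        - (a^3/24 - a^3*(12*x/a^3 - 1)^2/48), ?_, ?_⟩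
    · -- the bound
      have hE : Real.log (Real.exp 1 * a^3/(12*x)) * (x/2)
          - (a^3/24 - a^3*(12*x/a^3 - 1)^2/48)
          = a^3/24 * (t - t * Real.log t - 1 + (t-1)^2/2) := by
        rw [hlog]
        have hx : x = a^3 * t / 12 := by rw [htdef]; field_simp
        rw [hx]
        field_simp
        ring
      rw [hE, abs_mul, abs_of_pos (by positivity : (0:ℝ) < a^3/24)]
      rcases le_or_gt ε (1/2) with hhalf | hhalf
      · -- fine case
        have hg := g_bound t (le_trans habs hhalf)
        have hd3 : |t-1|^3 ≤ ε^3 := pow_le_pow_left₀ (abs_nonneg _) habs 3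
        have : a^3/24 * |t - t*Real.log t - 1 + (t-1)^2/2| ≤ a^3/24 * (4 * ε^3) := by
          apply mul_le_mul_of_nonneg_left _ (by positivity)
          calc |t - t*Real.log t - 1 + (t-1)^2/2| ≤ 4*|t-1|^3 := hg
            _ ≤ 4*ε^3 := by linarith
        calc a^3/24 * |t - t*Real.log t - 1 + (t-1)^2/2| ≤ a^3/24 * (4*ε^3) := this
          _ = a^3 * (a^4)⁻¹ / 6 := by rw [hε3]; ring
          _ ≤ 100 / a := by
              rw [div_le_div_iff₀ (by positivity) ha0]
              have : a^3 * (a^4)⁻¹ = a⁻¹ := by field_simp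
              rw [this]
              have : a⁻¹ * a = 1 := inv_mul_cancel₀ ha0.ne'
              nlinarith
      · -- crude case: a < 2
        have ha2 : a < 2 := by
          by_contra hc
          push_neg at hc
          have h16 : (16:ℝ) ≤ a^4 := by
            have := pow_le_pow_left₀ (by norm_num : (0:ℝ) ≤ 2) hc 4
            norm_num at this; linarith
          have h3' : ε^3 ≤ 1/16 := by
            rw [hε3, inv_le_comm₀ (by positivity) (by norm_num)]; linarith
          have h8 : (1/2:ℝ)^3 ≤ ε^3 := pow_le_pow_left₀ (by norm_num) hhalf.le 3
          norm_num at h8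
          linarith
        have hlogb : |t * Real.log t| ≤ 2 := by
          rcases le_or_gt t 1 with h | h
          · have hlt : -Real.log t ≤ 1/t - 1 := by
              have := Real.log_le_sub_one_of_pos (show (0:ℝ) < 1/t by positivity)
              rwa [Real.log_div one_ne_zero ht0.ne', Real.log_one, zero_sub] at this
            have hln : Real.log t ≤ 0 := Real.log_nonpos ht0.le h
            rw [abs_of_nonpos (mul_nonpos_of_nonneg_of_nonpos ht0.le hln)]
            have : t * (-Real.log t) ≤ t * (1/t - 1) := by
              apply mul_le_mul_of_nonneg_left hlt ht0.le
            have ht1 : t * (1/t - 1) = 1 - t := by field_simp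
            nlinarith
          · have hln : 0 ≤ Real.log t := Real.log_nonneg h.le
            have hup : Real.log t ≤ t - 1 := Real.log_le_sub_one_of_pos ht0
            rw [abs_of_nonneg (by positivity)]
            nlinarith
        have hg : |t - t*Real.log t - 1 + (t-1)^2/2| ≤ 4 := by
          have h1' : |t - 1| ≤ 1 := le_trans habs hε1
          have hA := abs_le.1 h1'
          have hB := abs_le.1 hlogb
          rw [abs_le]
          constructor <;> nlinarith [sq_nonneg (t-1)]
        have ha3' : a^3 < 8 := by
          have := pow_lt_pow_left₀ ha2 ha0.le (n := 3) (by norm_num)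
          norm_num at this; linarith
        calc a^3/24 * |t - t*Real.log t - 1 + (t-1)^2/2| ≤ 8/24 * 4 := by
              apply mul_le_mul (by linarith) hg (abs_nonneg _) (by norm_num)
          _ ≤ 100 / a := by
              rw [le_div_iff₀ ha0]
              nlinarith
    · -- the equality
      rw [Real.rpow_def_of_pos hb]
      congr 1
      ring
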